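/- Let a, b be nonzero complex numbers with |a| ≤ |b|, and let γ(t) = exp(t·Log(b/a))·a for t ∈ [0,1] be the quasihyperbolic geodesic (logarithmic spiral) in ℂ \ {0} from a to b. Then the Euclidean length of γ satisfies |a - b| ≤ ℓ(γ) ≤ 5|a - b|. -/

import Mathlib

private lemma le_of_sq_le_sq'' {x y : ℝ} (hy : 0 ≤ y) (h : x ^ 2 ≤ y ^ 2) : x ≤ y := by
  nlinarith [sq_nonneg (x - y), sq_nonneg (x + y)]

private lemma exp_aux1 {s : ℝ} (hs : 0 ≤ s) : s ^ 2 * Real.exp s ≤ (Real.exp s - 1) ^ 2 := by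
  have h1 : s / 2 ≤ Real.sinh (s / 2) := Real.self_le_sinh_iff.2 (by linarith)
  have h2 : Real.exp s - 1 = 2 * Real.exp (s / 2) * Real.sinh (s / 2) := by
    rw [Real.sinh_eq]
    rw [show Real.exp s = Real.exp (s / 2) * Real.exp (s / 2) by
      rw [← Real.exp_add]; ring_nf]
    have : Real.exp (s / 2) * Real.exp (-(s / 2)) = 1 := by
      rw [← Real.exp_add]; simp
    nlinarith [this]
  have h3 : 0 < Real.exp (s / 2) := Real.exp_pos _
  have h4 : Real.exp s = Real.exp (s / 2) * Real.exp (s / 2) := by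
    rw [← Real.exp_add]; ring_nf
  nlinarith [mul_le_mul h1 h1 (by linarith) (by linarith)]

private lemma exp_aux2 {s : ℝ} (h0 : 0 ≤ s) (h1 : s ≤ 1) :
    (Real.exp s - 1) ^ 2 ≤ 10 * s ^ 2 * Real.exp s := by
  have hA : Real.exp s - 1 ≤ s * Real.exp s := by
    have h := Real.add_one_le_exp (-s)
    have hp := Real.exp_pos s
    have : Real.exp (-s) * Real.exp s = 1 := by rw [← Real.exp_add]; simp
    nlinarith
  have hB : Real.exp s ≤ 3 := by
    have := Real.exp_one_lt_d9
    calc Real.exp s ≤ Real.exp 1 := Real.exp_le_exp.2 h1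
    _ ≤ 3 := by linarith
  have hp := Real.exp_pos s
  have h1e : 1 ≤ Real.exp s := by
    have := Real.add_one_le_exp s; linarith
  nlinarith [mul_le_mul hA hA (by nlinarith) (by positivity), sq_nonneg s]

private lemma trig_low {θ : ℝ} (h : |θ| ≤ Real.pi) : θ ^ 2 ≤ 5 * (1 - Real.cos θ) := by
  have h1 := Real.cos_le_one_sub_mul_cos_sq h
  have h2 : Real.pi < 3.15 := Real.pi_lt_d2
  have h3 : 0 < Real.pi := Real.pi_pos
  have h4 : Real.pi ^ 2 < 10 := by nlinarith
  have h5 : (1:ℝ)/5 ≤ 2 / Real.pi ^ 2 := by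
    rw [div_le_div_iff₀ (by norm_num) (by positivity)]; nlinarith
  nlinarith [mul_le_mul_of_nonneg_right h5 (sq_nonneg θ)]

private lemma key_low {s θ c : ℝ} (hs : 0 < s) (hc1 : 1 - c ≤ θ ^ 2 / 2) (hc0 : c ≤ 1) :
    (Real.exp s - 1) ^ 2 + 2 * Real.exp s * (1 - c) ≤
      (s ^ 2 + θ ^ 2) * (Real.exp s - 1) ^ 2 / s ^ 2 := by
  rw [le_div_iff₀ (by positivity)]
  have hE := exp_aux1 hs.le
  have hp := Real.exp_pos s
  have hint1 : 2 * Real.exp s * (1 - c) ≤ Real.exp s * θ ^ 2 := by nlinarith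
  have hint2 : Real.exp s * θ ^ 2 * s ^ 2 ≤ θ ^ 2 * (Real.exp s - 1) ^ 2 := by
    nlinarith [sq_nonneg θ]
  nlinarith [sq_nonneg s, mul_le_mul_of_nonneg_right hint1 (sq_nonneg s)]

private lemma key_high {s θ c : ℝ} (hs : 0 < s) (hθ : |θ| ≤ Real.pi)
    (hc : θ ^ 2 ≤ 5 * (1 - c)) :
    (s ^ 2 + θ ^ 2) * (Real.exp s - 1) ^ 2 / s ^ 2 ≤
      25 * ((Real.exp s - 1) ^ 2 + 2 * Real.exp s * (1 - c)) := by
  rw [div_le_iff₀ (by positivity)]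
  have hp := Real.exp_pos s
  have hπ : θ ^ 2 < 10 := by
    have h2 : Real.pi < 3.15 := Real.pi_lt_d2
    have h3 : 0 < Real.pi := Real.pi_pos
    have := abs_le.1 hθ
    nlinarith
  have hmain : θ ^ 2 * (Real.exp s - 1) ^ 2 ≤
      24 * s ^ 2 * (Real.exp s - 1) ^ 2 + 10 * s ^ 2 * Real.exp s * θ ^ 2 := by
    rcases le_or_gt 1 s with h1 | h1
    · have : θ ^ 2 ≤ 24 * s ^ 2 := by nlinarith
      nlinarith [sq_nonneg (Real.exp s - 1), sq_nonneg θ, mul_nonneg (sq_nonneg s) hp.le]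
    · have h2 := exp_aux2 hs.le h1.le
      nlinarith [sq_nonneg θ]
  have h6 : 10 * s ^ 2 * Real.exp s * θ ^ 2 ≤ 50 * s ^ 2 * Real.exp s * (1 - c) := by
    nlinarith [mul_nonneg (sq_nonneg s) hp.le]
  nlinarith [hmain, h6]

theorem length_log_spiral (a b : ℂ) (ha : a ≠ 0) (hb : b ≠ 0)
    (hab : ‖a‖ ≤ ‖b‖) (L : ℝ)
    (hL1 : ‖a‖ < ‖b‖ →
      L = ‖Complex.log (b / a)‖ * (‖b‖ - ‖a‖) /
            Real.log (‖b‖ / ‖a‖))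
    (hL2 : ‖a‖ = ‖b‖ →
      L = ‖a‖ * |Complex.arg (b / a)|) :
    ‖a - b‖ ≤ L ∧ L ≤ 5 * ‖a - b‖ := by
  set w : ℂ := b / a with hw_def
  have hw : w ≠ 0 := div_ne_zero hb ha
  set r : ℝ := ‖a‖ with hr_def
  set R : ℝ := ‖b‖ with hR_def
  have hr : 0 < r := by simpa [hr_def] using norm_pos_iff.mpr ha
  have hR : 0 < R := by simpa [hR_def] using norm_pos_iff.mpr hb
  set θ : ℝ := Complex.arg w with hθ_def
  have hθ : |θ| ≤ Real.pi :=
    abs_le.2 ⟨(Complex.neg_pi_lt_arg w).le, Complex.arg_le_pi w⟩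
  set c : ℝ := Real.cos θ with hc_def
  have hc0 : c ≤ 1 := Real.cos_le_one θ
  have hc1 : 1 - c ≤ θ ^ 2 / 2 := by
    have := Real.one_sub_sq_div_two_le_cos (x := θ); linarith
  have hclow : θ ^ 2 ≤ 5 * (1 - c) := trig_low hθ
  have hρ : ‖w‖ = R / r := by rw [hw_def]; exact norm_div _ _
  have hwre : w.re = (R / r) * c := by
    have := Complex.cos_arg hw
    rw [hc_def, hθ_def, this, hρ]
    field_simp
  have hwre' : r * w.re = R * c := by rw [hwre]; field_simp
  have hnw : w.re ^ 2 + w.im ^ 2 = (R / r) ^ 2 := by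
    rw [← hρ, Complex.sq_norm, Complex.normSq_apply]; ring
  have hnw' : r ^ 2 * (w.re ^ 2 + w.im ^ 2) = R ^ 2 := by
    rw [hnw]; field_simp
  -- |a - b|^2 = (R - r)^2 + 2 r R (1 - c)
  have habd : ‖a - b‖ ^ 2 = (R - r) ^ 2 + 2 * r * R * (1 - c) := by
    have h1 : a - b = a * (1 - w) := by
      rw [hw_def]; field_simp
    have h2 : ‖a - b‖ ^ 2 = ‖a‖ ^ 2 * ((1 - w.re) ^ 2 + w.im ^ 2) := by
      have hre : (1 - w).re = 1 - w.re := by simp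
      have him : (1 - w).im = -w.im := by simp
      rw [h1, norm_mul, mul_pow, Complex.sq_norm (1 - w), Complex.normSq_apply, hre, him]
      ring
    rw [h2, ← hr_def]
    linear_combination hnw' - 2 * r * hwre'
  rcases lt_or_eq_of_le hab with hlt | heq
  · -- |a| < |b|
    set s : ℝ := Real.log (R / r) with hs_def
    have hρ1 : 1 < R / r := (one_lt_div hr).2 hlt
    have hs : 0 < s := Real.log_pos hρ1
    have hes : Real.exp s = R / r := Real.exp_log (by positivity)
    have hlog : ‖Complex.log w‖ ^ 2 = s ^ 2 + θ ^ 2 := by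
      rw [Complex.sq_norm, Complex.normSq_apply, Complex.log_re, Complex.log_im, hρ]
      ring
    have hLe : L = ‖Complex.log w‖ * (R - r) / s :=
      hL1 hlt
    have hL0 : 0 ≤ L := by
      rw [hLe]
      exact div_nonneg (mul_nonneg (by positivity) (by linarith)) hs.le
    have hLsq : L ^ 2 = (s ^ 2 + θ ^ 2) * (R - r) ^ 2 / s ^ 2 := by
      rw [hLe, div_pow, mul_pow, hlog]
    have hRr : R - r = r * (Real.exp s - 1) := by
      rw [hes]; field_simp
    have hRe : R = r * Real.exp s := by rw [hes]; field_simp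
    constructor
    · apply le_of_sq_le_sq'' hL0
      rw [hLsq, habd, hRr, hRe]
      have := key_low (θ := θ) (c := c) hs hc1 hc0
      have hmul := mul_le_mul_of_nonneg_left this (sq_nonneg r)
      calc (r * (Real.exp s - 1)) ^ 2 + 2 * r * (r * Real.exp s) * (1 - c)
          = r ^ 2 * ((Real.exp s - 1) ^ 2 + 2 * Real.exp s * (1 - c)) := by ring
        _ ≤ r ^ 2 * ((s ^ 2 + θ ^ 2) * (Real.exp s - 1) ^ 2 / s ^ 2) := hmul
        _ = (s ^ 2 + θ ^ 2) * (r * (Real.exp s - 1)) ^ 2 / s ^ 2 := by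
            field_simp
    · apply le_of_sq_le_sq'' (by positivity)
      rw [mul_pow, hLsq, habd, hRr, hRe]
      have := key_high (θ := θ) (c := c) hs hθ hclow
      have hmul := mul_le_mul_of_nonneg_left this (sq_nonneg r)
      calc (s ^ 2 + θ ^ 2) * (r * (Real.exp s - 1)) ^ 2 / s ^ 2
          = r ^ 2 * ((s ^ 2 + θ ^ 2) * (Real.exp s - 1) ^ 2 / s ^ 2) := by
            field_simp
        _ ≤ r ^ 2 * (25 * ((Real.exp s - 1) ^ 2 + 2 * Real.exp s * (1 - c))) := hmul
        _ = 5 ^ 2 * ((r * (Real.exp s - 1)) ^ 2 + 2 * r * (r * Real.exp s) * (1 - c)) := by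
            ring
  · -- |a| = |b|
    have hLe : L = r * |θ| := hL2 heq
    have hRr : R = r := heq.symm
    have hL0 : 0 ≤ L := by rw [hLe]; positivity
    constructor
    · apply le_of_sq_le_sq'' hL0
      rw [hLe, habd, hRr, mul_pow, sq_abs]
      nlinarith [hr.le, sq_nonneg r]
    · apply le_of_sq_le_sq'' (by positivity)
      rw [hLe, mul_pow, mul_pow, habd, hRr, sq_abs]
      nlinarith [hr.le, sq_nonneg r, sq_nonneg θ]
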